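/- arXiv:1508.05057 — 4 statements merged into one kernel-verified Lean document; each statement's English description precedes it below -/
import Mathlib

section
/- Let 1 < p < ∞ and let Q₀ ⊂ ℝⁿ be a cube with sides parallel to the coordinate axes. Then for every f ∈ L¹(Q₀), GaRo_p(f,Q₀) ≤ 2 · JN_p(f,Q₀); in particular JN_p(Q₀) ⊂ GaRo_p(Q₀). -/
open MeasureTheory Set
open scoped ENNReal NNReal

noncomputable section

/-- The distribution function `λ_f(t) = μ {x : |f(x)| > t}`. -/
def distFun {α : Type*} [MeasurableSpace α] (μ : Measure α) (f : α → ℝ) (t : ℝ) : ℝ≥0∞ :=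
  μ {x | t < |f x|}

/-- The non-increasing rearrangement `f*(t) = inf {s > 0 : λ_f(s) ≤ t}`. -/
def rearr {α : Type*} [MeasurableSpace α] (μ : Measure α) (f : α → ℝ) (t : ℝ) : ℝ≥0∞ :=
  sInf (ENNReal.ofReal '' {s : ℝ | 0 < s ∧ distFun μ f s ≤ ENNReal.ofReal t})

/-- The maximal function `f**(t) = (1/t) ∫₀ᵗ f*(s) ds`. -/
def dstar {α : Type*} [MeasurableSpace α] (μ : Measure α) (f : α → ℝ) (t : ℝ) : ℝ≥0∞ :=
  (∫⁻ s in Set.Ioc (0 : ℝ) t, rearr μ f s) / ENNReal.ofReal t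

/-- The `L(∞,∞)` "norm" : `sup_{t>0} (f**(t) - f*(t))`. -/
def oscNorm {α : Type*} [MeasurableSpace α] (μ : Measure α) (f : α → ℝ) : ℝ≥0∞ :=
  ⨆ (t : ℝ) (_ : 0 < t), dstar μ f t - rearr μ f t

/-- The Marcinkiewicz `L(p,∞)` quasinorm `‖f‖*_{L(p,∞)} = sup_{t>0} t (λ_f(t))^{1/p}`. -/
def wkNorm {α : Type*} [MeasurableSpace α] (μ : Measure α) (p : ℝ) (f : α → ℝ) : ℝ≥0∞ :=
  ⨆ (t : ℝ) (_ : 0 < t), ENNReal.ofReal t * distFun μ f t ^ (1 / p)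

/-- `‖f‖_{L(p,∞)} = sup_{s>0} s^{1/p} f**(s)`. -/
def wkNormStarStar {α : Type*} [MeasurableSpace α] (μ : Measure α) (p : ℝ) (f : α → ℝ) : ℝ≥0∞ :=
  ⨆ (s : ℝ) (_ : 0 < s), ENNReal.ofReal s ^ (1 / p) * dstar μ f s

/-- `‖f‖*_{L(p,∞)} = sup_{s>0} s^{1/p} f*(s)` (rearrangement form). -/
def wkNormStar {α : Type*} [MeasurableSpace α] (μ : Measure α) (p : ℝ) (f : α → ℝ) : ℝ≥0∞ :=
  ⨆ (s : ℝ) (_ : 0 < s), ENNReal.ofReal s ^ (1 / p) * rearr μ f s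

/-- `‖f‖^#_{L(p,∞)} = sup_{s>0} s^{1/p} (f**(s) - f*(s))`. -/
def sharpNorm {α : Type*} [MeasurableSpace α] (μ : Measure α) (p : ℝ) (f : α → ℝ) : ℝ≥0∞ :=
  ⨆ (s : ℝ) (_ : 0 < s), ENNReal.ofReal s ^ (1 / p) * (dstar μ f s - rearr μ f s)

/-- `‖f‖^{##}_{L(p,∞)} = sup_{t>0} (λ_f(t))^{-(1-1/p)} ∫_t^∞ λ_f(s) ds`. -/
def sharpSharpNorm {α : Type*} [MeasurableSpace α] (μ : Measure α) (p : ℝ) (f : α → ℝ) : ℝ≥0∞ :=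
  ⨆ (t : ℝ) (_ : 0 < t),
    distFun μ f t ^ (-(1 - 1 / p)) * ∫⁻ s in Set.Ioi t, distFun μ f s

/-- `‖f‖^{##}_{L(∞,∞)} = inf {C : ∫_t^∞ λ_f(s) ds ≤ C λ_f(t) for all t > 0}`. -/
def sharpSharpInf {α : Type*} [MeasurableSpace α] (μ : Measure α) (f : α → ℝ) : ℝ≥0∞ :=
  sInf {C : ℝ≥0∞ | ∀ t : ℝ, 0 < t →
    ∫⁻ s in Set.Ioi t, distFun μ f s ≤ C * distFun μ f t}

/-- O'Neil's quantity `inf {C^{1/p} : ∫_t^∞ λ_f(s) ds ≤ C t^{1-p} for all t > 0}`. -/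
def oneilQuantity {α : Type*} [MeasurableSpace α] (μ : Measure α) (p : ℝ) (f : α → ℝ) : ℝ≥0∞ :=
  sInf {D : ℝ≥0∞ | ∃ C : ℝ≥0∞, D = C ^ (1 / p) ∧
    ∀ t : ℝ, 0 < t → ∫⁻ s in Set.Ioi t, distFun μ f s ≤ C * ENNReal.ofReal t ^ (1 - p)}

/-- A cube in `ℝⁿ` with sides parallel to the coordinate axes. -/
def IsCube {n : ℕ} (Q : Set (Fin n → ℝ)) : Prop :=
  ∃ (a : Fin n → ℝ) (l : ℝ), 0 < l ∧ Q = Set.univ.pi fun i => Set.Icc (a i) (a i + l)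

/-- A countable family of subcubes of `Q₀` with pairwise disjoint interiors. -/
def IsPackingIn {n : ℕ} (Q₀ : Set (Fin n → ℝ)) (Q : ℕ → Set (Fin n → ℝ)) : Prop :=
  (∀ i, IsCube (Q i) ∧ Q i ⊆ Q₀) ∧
    Pairwise fun i j => interior (Q i) ∩ interior (Q j) = ∅

/-- The average `f_Q = (1/|Q|) ∫_Q f`. -/
def cubeAvg {n : ℕ} (f : (Fin n → ℝ) → ℝ) (Q : Set (Fin n → ℝ)) : ℝ :=
  ⨍ x in Q, f x

/-- The mean oscillation `(1/|Q|) ∫_Q |f - f_Q|`. -/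
def meanOsc {n : ℕ} (f : (Fin n → ℝ) → ℝ) (Q : Set (Fin n → ℝ)) : ℝ :=
  ⨍ x in Q, |f x - cubeAvg f Q|

/-- The John–Nirenberg functional `JN_p(f,Q₀)`. -/
def JN {n : ℕ} (p : ℝ) (f : (Fin n → ℝ) → ℝ) (Q₀ : Set (Fin n → ℝ)) : ℝ≥0∞ :=
  ⨆ (Q : ℕ → Set (Fin n → ℝ)) (_ : IsPackingIn Q₀ Q),
    (∑' i, volume (Q i) * ENNReal.ofReal (meanOsc f (Q i)) ^ p) ^ (1 / p)

/-- The BMO norm `‖f‖_{BMO(Q₀)}`. -/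
def bmoNorm {n : ℕ} (f : (Fin n → ℝ) → ℝ) (Q₀ : Set (Fin n → ℝ)) : ℝ≥0∞ :=
  ⨆ (Q : Set (Fin n → ℝ)) (_ : IsCube Q ∧ Q ⊆ Q₀), ENNReal.ofReal (meanOsc f Q)

/-- The Garsia–Rodemich functional `GaRo_p(f,Q₀)`: the least constant `C` such that
for every packing `{Qᵢ}` of `Q₀`,
`Σᵢ (1/|Qᵢ|) ∫_{Qᵢ}∫_{Qᵢ} |f(x)-f(y)| dx dy ≤ C (Σᵢ |Qᵢ|)^{1/p'}` where `1/p' = 1 - 1/p`. -/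
def GaRo {n : ℕ} (p : ℝ) (f : (Fin n → ℝ) → ℝ) (Q₀ : Set (Fin n → ℝ)) : ℝ≥0∞ :=
  sInf {C : ℝ≥0∞ | ∀ Q : ℕ → Set (Fin n → ℝ), IsPackingIn Q₀ Q →
    (∑' i, (volume (Q i))⁻¹ *
        ∫⁻ x in Q i, ∫⁻ y in Q i, ENNReal.ofReal |f x - f y|) ≤
      C * (∑' i, volume (Q i)) ^ (1 - 1 / p)}


theorem isCube_volume {n : ℕ} {Q : Set (Fin n → ℝ)} (h : IsCube Q) :
    MeasurableSet Q ∧ volume Q ≠ 0 ∧ volume Q ≠ ⊤ := by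
  obtain ⟨a, l, hl, rfl⟩ := h
  refine ⟨MeasurableSet.univ_pi fun i => measurableSet_Icc, ?_, ?_⟩ <;>
    simp [Real.volume_Icc_pi, Finset.prod_const, pow_ne_zero, hl.le, hl.ne',
      ENNReal.pow_ne_top, ENNReal.ofReal_ne_top, ENNReal.ofReal_eq_zero, not_le, hl]

theorem cube_double_integral_bound {n : ℕ} {Q : Set (Fin n → ℝ)} (hQ : IsCube Q)
    {f : (Fin n → ℝ) → ℝ} (hf : IntegrableOn f Q) :
    (volume Q)⁻¹ * ∫⁻ x in Q, ∫⁻ y in Q, ENNReal.ofReal |f x - f y| ≤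
      2 * volume Q * ENNReal.ofReal (meanOsc f Q) := by
  obtain ⟨hm, hV0, hVt⟩ := isCube_volume hQ
  set V := volume Q with hV
  set c := cubeAvg f Q with hc
  set g : (Fin n → ℝ) → ℝ := fun x => |f x - c| with hgdef
  have hg : IntegrableOn g Q := (hf.sub (integrableOn_const hVt)).abs
  have hgm : AEMeasurable (fun y => ENNReal.ofReal (g y)) (volume.restrict Q) :=
    hg.aemeasurable.ennreal_ofReal
  set I := ∫⁻ y in Q, ENNReal.ofReal (g y) with hI
  set m := ENNReal.ofReal (meanOsc f Q) with hmm
  have hIeq : I = V * m := by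
    have h1 : ENNReal.ofReal (∫ y in Q, g y) = I :=
      MeasureTheory.ofReal_integral_eq_lintegral_ofReal hg
        (Filter.Eventually.of_forall fun x => abs_nonneg _)
    have hVr : V.toReal ≠ 0 := ENNReal.toReal_ne_zero.mpr ⟨hV0, hVt⟩
    have h2 : (∫ y in Q, g y) = V.toReal * meanOsc f Q := by
      have h3 : meanOsc f Q = (V.toReal)⁻¹ * ∫ y in Q, g y := by
        rw [meanOsc, setAverage_eq, smul_eq_mul]; rfl
      rw [h3]
      field_simp
    rw [← h1, h2, ENNReal.ofReal_mul ENNReal.toReal_nonneg, ENNReal.ofReal_toReal hVt, hmm]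
  have hdouble : (∫⁻ x in Q, ∫⁻ y in Q, ENNReal.ofReal |f x - f y|) ≤ 2 * V * I := by
    have step1 : ∀ x, (∫⁻ y in Q, ENNReal.ofReal |f x - f y|) ≤
        ENNReal.ofReal (g x) * V + I := by
      intro x
      have h4 : (∫⁻ y in Q, ENNReal.ofReal |f x - f y|) ≤
          ∫⁻ y in Q, (ENNReal.ofReal (g x) + ENNReal.ofReal (g y)) := by
        refine lintegral_mono fun y => ?_
        rw [← ENNReal.ofReal_add (abs_nonneg _) (abs_nonneg _)]
        refine ENNReal.ofReal_le_ofReal ?_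
        calc |f x - f y| ≤ |f x - c| + |c - f y| := abs_sub_le _ _ _
          _ = g x + g y := by rw [abs_sub_comm c (f y)]
      refine h4.trans_eq ?_
      rw [lintegral_add_left measurable_const, setLIntegral_const]
    calc (∫⁻ x in Q, ∫⁻ y in Q, ENNReal.ofReal |f x - f y|)
        ≤ ∫⁻ x in Q, (ENNReal.ofReal (g x) * V + I) := lintegral_mono step1
      _ = I * V + I * V := by
          rw [lintegral_add_right _ measurable_const, setLIntegral_const,
            lintegral_mul_const'' V hgm]
      _ = 2 * V * I := by ring
  calc (V)⁻¹ * ∫⁻ x in Q, ∫⁻ y in Q, ENNReal.ofReal |f x - f y|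
      ≤ V⁻¹ * (2 * V * I) := mul_le_mul_right hdouble _
    _ = 2 * V * m := by
        rw [hIeq, show 2 * V * (V * m) = V * (2 * V * m) by ring, ← mul_assoc,
          ENNReal.inv_mul_cancel hV0 hVt, one_mul]

theorem holder_tsum (p : ℝ) (hp : 1 < p) (a m : ℕ → ℝ≥0∞)
    (ha0 : ∀ i, a i ≠ 0) (hat : ∀ i, a i ≠ ⊤) :
    ∑' i, a i * m i ≤
      (∑' i, a i * m i ^ p) ^ (1 / p) * (∑' i, a i) ^ (1 - 1 / p) := by
  have hpq : p.HolderConjugate (p / (p - 1)) := Real.HolderConjugate.conjExponent hp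
  set q := p / (p - 1) with hq
  have hp0 : (0:ℝ) < p := hpq.pos
  have hq0 : (0:ℝ) < q := hpq.symm.pos
  have h1q : 1 / q = 1 - 1 / p := by
    rw [one_div, one_div, ← hpq.one_sub_inv]
  have holder := ENNReal.lintegral_mul_le_Lp_mul_Lq (Measure.count : Measure ℕ) hpq
    (f := fun i => a i ^ (1 / p) * m i) (g := fun i => a i ^ (1 / q))
    measurable_from_top.aemeasurable measurable_from_top.aemeasurable
  simp only [Pi.mul_apply, MeasureTheory.lintegral_count] at holder
  have hsum : 1 / p + 1 / q = 1 := by rw [one_div, one_div]; exact hpq.inv_add_inv_eq_one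
  have hsplit : ∀ i, a i * m i = (a i ^ (1 / p) * m i) * (a i ^ (1 / q)) := by
    intro i
    rw [mul_right_comm, ← ENNReal.rpow_add _ _ (ha0 i) (hat i), hsum, ENNReal.rpow_one]
  have hfp : ∀ i, (a i ^ (1 / p) * m i) ^ p = a i * m i ^ p := by
    intro i
    rw [ENNReal.mul_rpow_of_nonneg _ _ hp0.le, ← ENNReal.rpow_mul,
      one_div_mul_cancel hp0.ne', ENNReal.rpow_one]
  have hgq : ∀ i, (a i ^ (1 / q)) ^ q = a i := by
    intro i
    rw [← ENNReal.rpow_mul, one_div_mul_cancel hq0.ne', ENNReal.rpow_one]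
  calc ∑' i, a i * m i = ∑' i, (a i ^ (1 / p) * m i) * (a i ^ (1 / q)) := by
        simp only [hsplit]
    _ ≤ (∑' i, (a i ^ (1 / p) * m i) ^ p) ^ (1 / p) * (∑' i, (a i ^ (1 / q)) ^ q) ^ (1 / q) :=
        holder
    _ = (∑' i, a i * m i ^ p) ^ (1 / p) * (∑' i, a i) ^ (1 - 1 / p) := by
        simp only [hfp, hgq]; rw [h1q]

/-- `GaRo_p(f,Q₀) ≤ 2 · JN_p(f,Q₀)`; in particular `JN_p(Q₀) ⊂ GaRo_p(Q₀)`. -/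
theorem gaRo_le_two_jn {n : ℕ} (p : ℝ) (hp : 1 < p)
    (Q₀ : Set (Fin n → ℝ)) (hQ₀ : IsCube Q₀)
    (f : (Fin n → ℝ) → ℝ) (hf : IntegrableOn f Q₀) :
    GaRo p f Q₀ ≤ 2 * JN p f Q₀ :=  by
  refine sInf_le ?_
  intro Q hQ
  set a : ℕ → ℝ≥0∞ := fun i => volume (Q i) with hadef
  set m : ℕ → ℝ≥0∞ := fun i => ENNReal.ofReal (meanOsc f (Q i)) with hmdef
  have ha0 : ∀ i, a i ≠ 0 := fun i => (isCube_volume (hQ.1 i).1).2.1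
  have hat : ∀ i, a i ≠ ⊤ := fun i => (isCube_volume (hQ.1 i).1).2.2
  have hJN : (∑' i, a i * m i ^ p) ^ (1 / p) ≤ JN p f Q₀ :=
    le_iSup₂ (f := fun (Q : ℕ → Set (Fin n → ℝ)) (_ : IsPackingIn Q₀ Q) =>
      (∑' i, volume (Q i) * ENNReal.ofReal (meanOsc f (Q i)) ^ p) ^ (1 / p)) Q hQ
  calc (∑' i, (volume (Q i))⁻¹ *
        ∫⁻ x in Q i, ∫⁻ y in Q i, ENNReal.ofReal |f x - f y|)
      ≤ ∑' i, 2 * a i * m i :=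
        ENNReal.tsum_le_tsum fun i =>
          cube_double_integral_bound (hQ.1 i).1 (hf.mono_set (hQ.1 i).2)
    _ = 2 * ∑' i, a i * m i := by rw [← ENNReal.tsum_mul_left]; simp [mul_assoc]
    _ ≤ 2 * ((∑' i, a i * m i ^ p) ^ (1 / p) * (∑' i, a i) ^ (1 - 1 / p)) :=
        mul_le_mul_right (holder_tsum p hp a m ha0 hat) 2
    _ ≤ 2 * JN p f Q₀ * (∑' i, volume (Q i)) ^ (1 - 1 / p) := by
        rw [mul_assoc]
        exact mul_le_mul_right (mul_le_mul_left hJN _) 2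
end
end

section
/- Let 1 < p < ∞ and let Q₀ ⊂ ℝⁿ be a cube with sides parallel to the coordinate axes. Then for every f ∈ L¹(Q₀), GaRo_p(f,Q₀) ≤ (2p/(p−1)) · ‖f‖*_{L(p,∞)(Q₀)}, where ‖f‖*_{L(p,∞)} = sup_{t>0} t (λ_f(t))^{1/p}. -/
open MeasureTheory Set
open scoped ENNReal NNReal

noncomputable section

/-! ### Auxiliary lemmas -/

lemma IsCube.measurableSet' {n : ℕ} {Q : Set (Fin n → ℝ)} (h : IsCube Q) :
    MeasurableSet Q := by
  obtain ⟨a, l, hl, rfl⟩ := h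
  exact MeasurableSet.univ_pi fun i => measurableSet_Icc

lemma IsCube.volume_eq {n : ℕ} {Q : Set (Fin n → ℝ)} (h : IsCube Q) :
    ∃ l : ℝ, 0 < l ∧ volume Q = ENNReal.ofReal l ^ n ∧
      volume (interior Q) = ENNReal.ofReal l ^ n := by
  obtain ⟨a, l, hl, rfl⟩ := h
  refine ⟨l, hl, ?_, ?_⟩
  · rw [volume_pi_pi]
    simp [Real.volume_Icc]
  · rw [interior_pi_set finite_univ]
    simp only [interior_Icc]
    rw [volume_pi_pi]
    simp [Real.volume_Ioo]

lemma IsCube.volume_pos {n : ℕ} {Q : Set (Fin n → ℝ)} (h : IsCube Q) :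
    0 < volume Q := by
  obtain ⟨l, hl, hv, -⟩ := h.volume_eq
  rw [hv]
  exact ENNReal.pow_pos (ENNReal.ofReal_pos.mpr hl) n

lemma IsCube.volume_lt_top {n : ℕ} {Q : Set (Fin n → ℝ)} (h : IsCube Q) :
    volume Q < ⊤ := by
  obtain ⟨l, hl, hv, -⟩ := h.volume_eq
  rw [hv]
  exact ENNReal.pow_lt_top ENNReal.ofReal_lt_top

lemma IsCube.volume_interior {n : ℕ} {Q : Set (Fin n → ℝ)} (h : IsCube Q) :
    volume (interior Q) = volume Q := by
  obtain ⟨l, hl, hv, hv2⟩ := h.volume_eq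
  rw [hv, hv2]

lemma IsCube.ae_eq_interior {n : ℕ} {Q : Set (Fin n → ℝ)} (h : IsCube Q) :
    Q =ᵐ[volume] interior Q := by
  rw [MeasureTheory.ae_eq_set]
  constructor
  · have hd : volume (Q \ interior Q) = volume Q - volume (interior Q) :=
      measure_diff interior_subset isOpen_interior.measurableSet.nullMeasurableSet
        (by rw [h.volume_interior]; exact h.volume_lt_top.ne)
    rw [hd, h.volume_interior, tsub_self]
  · rw [diff_eq_empty.mpr interior_subset]
    exact measure_empty

/-- Pointwise bound on the distribution function from the weak norm. -/
lemma distFun_le_of_wkNorm {α : Type*} [MeasurableSpace α] (μ : Measure α) (p : ℝ)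
    (hp : 1 < p) (f : α → ℝ) {t : ℝ} (ht : 0 < t) :
    distFun μ f t ≤ (wkNorm μ p f / ENNReal.ofReal t) ^ p := by
  have hp0 : (0:ℝ) < p := lt_trans one_pos hp
  have h1 : ENNReal.ofReal t * distFun μ f t ^ (1 / p) ≤ wkNorm μ p f :=
    le_iSup₂ (f := fun (t : ℝ) (_ : 0 < t) => ENNReal.ofReal t * distFun μ f t ^ (1 / p)) t ht
  have h2 : distFun μ f t ^ (1 / p) ≤ wkNorm μ p f / ENNReal.ofReal t := by
    rw [ENNReal.le_div_iff_mul_le (Or.inl (by simpa using ht)) (Or.inl ENNReal.ofReal_ne_top)]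
    rwa [mul_comm]
  calc distFun μ f t = (distFun μ f t ^ (1 / p)) ^ p := by
        rw [← ENNReal.rpow_mul, one_div_mul_cancel hp0.ne', ENNReal.rpow_one]
    _ ≤ (wkNorm μ p f / ENNReal.ofReal t) ^ p := ENNReal.rpow_le_rpow h2 hp0.le

/-- The elementary integral estimate `∫₀^∞ min(V, (W/t)^p) dt ≤ (p/(p-1)) W V^{1-1/p}`. -/
lemma min_integral_bound (p : ℝ) (hp : 1 < p) (V W : ℝ≥0∞) (hV : V ≠ ⊤) :
    ∫⁻ t in Set.Ioi (0:ℝ), min V ((W / ENNReal.ofReal t) ^ p) ≤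
      ENNReal.ofReal (p / (p - 1)) * W * V ^ (1 - 1 / p) := by
  have hp0 : (0:ℝ) < p := lt_trans one_pos hp
  have hp1 : (0:ℝ) < p - 1 := by linarith
  rcases eq_or_ne V 0 with hV0 | hV0
  · calc ∫⁻ t in Set.Ioi (0:ℝ), min V ((W / ENNReal.ofReal t) ^ p)
        ≤ ∫⁻ _ in Set.Ioi (0:ℝ), (0:ℝ≥0∞) := by
          refine lintegral_mono fun t => ?_
          rw [← hV0]; exact min_le_left _ _
      _ = 0 := by simp
      _ ≤ _ := zero_le
  rcases eq_or_ne W 0 with hW0 | hW0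
  · calc ∫⁻ t in Set.Ioi (0:ℝ), min V ((W / ENNReal.ofReal t) ^ p)
        ≤ ∫⁻ t in Set.Ioi (0:ℝ), (W / ENNReal.ofReal t) ^ p := lintegral_mono fun t => min_le_right _ _
      _ = 0 := by
          rw [hW0]
          simp [ENNReal.zero_rpow_of_pos hp0, ENNReal.zero_div]
      _ ≤ _ := zero_le
  rcases eq_or_ne W ⊤ with hWtop | hWtop
  · have hVp : V ^ (1 - 1/p) ≠ 0 := fun h =>
      (ENNReal.rpow_eq_zero_iff.mp h).elim (fun h' => hV0 h'.1) (fun h' => hV h'.1)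
    rw [hWtop, ENNReal.mul_top (ENNReal.ofReal_pos.mpr (div_pos hp0 hp1)).ne',
      ENNReal.top_mul hVp]
    exact le_top
  -- main case
  set v : ℝ := V.toReal with hv
  set w : ℝ := W.toReal with hw
  have hvpos : 0 < v := ENNReal.toReal_pos hV0 hV
  have hwpos : 0 < w := ENNReal.toReal_pos hW0 hWtop
  have hVv : V = ENNReal.ofReal v := (ENNReal.ofReal_toReal hV).symm
  have hWw : W = ENNReal.ofReal w := (ENNReal.ofReal_toReal hWtop).symm
  set t₀ : ℝ := w * v ^ (-(1/p)) with ht₀def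
  have ht₀ : 0 < t₀ := mul_pos hwpos (Real.rpow_pos_of_pos hvpos _)
  have hsplit : Set.Ioi (0:ℝ) = Set.Ioc 0 t₀ ∪ Set.Ioi t₀ := (Set.Ioc_union_Ioi_eq_Ioi ht₀.le).symm
  have hexp0 : (0:ℝ) ≤ 1 - 1/p := by
    have : 1/p < 1 := by rw [div_lt_one hp0]; exact hp
    linarith
  have hVpow_ne_top : V ^ (1 - 1/p) ≠ ⊤ := ENNReal.rpow_ne_top_of_nonneg hexp0 hV
  have hexp : (-(1/p)) * (1 - p) = 1 - 1/p := by
    field_simp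
    ring
  -- part 1
  have part1 : ∫⁻ t in Set.Ioc (0:ℝ) t₀, min V ((W / ENNReal.ofReal t) ^ p) ≤
      W * V ^ (1 - 1/p) := by
    calc ∫⁻ t in Set.Ioc (0:ℝ) t₀, min V ((W / ENNReal.ofReal t) ^ p)
        ≤ ∫⁻ _ in Set.Ioc (0:ℝ) t₀, V := lintegral_mono fun t => min_le_left _ _
      _ = V * ENNReal.ofReal t₀ := by rw [setLIntegral_const, Real.volume_Ioc, sub_zero]
      _ = W * V ^ (1 - 1/p) := by
          rw [ht₀def, ENNReal.ofReal_mul hwpos.le, ← hWw,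
            ← ENNReal.ofReal_rpow_of_pos hvpos, ← hVv]
          rw [mul_comm V _, mul_assoc]
          congr 1
          nth_rewrite 2 [← ENNReal.rpow_one V]
          rw [← ENNReal.rpow_add _ _ hV0 hV]
          congr 1
          ring
  -- part 2
  have part2 : ∫⁻ t in Set.Ioi t₀, min V ((W / ENNReal.ofReal t) ^ p) ≤
      ENNReal.ofReal (1 / (p - 1)) * W * V ^ (1 - 1/p) := by
    have hWp_ne_top : W ^ p ≠ ⊤ := ENNReal.rpow_ne_top_of_nonneg hp0.le hWtop
    calc ∫⁻ t in Set.Ioi t₀, min V ((W / ENNReal.ofReal t) ^ p)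
        ≤ ∫⁻ t in Set.Ioi t₀, (W / ENNReal.ofReal t) ^ p :=
          lintegral_mono fun t => min_le_right _ _
      _ = ∫⁻ t in Set.Ioi t₀, W ^ p * ENNReal.ofReal (t ^ (-p)) := by
          refine setLIntegral_congr_fun measurableSet_Ioi (fun t ht => ?_)
          have htpos : 0 < t := ht₀.trans ht
          rw [ENNReal.div_rpow_of_nonneg _ _ hp0.le, ENNReal.ofReal_rpow_of_pos htpos,
            div_eq_mul_inv, ← ENNReal.ofReal_inv_of_pos (Real.rpow_pos_of_pos htpos p),
            ← Real.rpow_neg htpos.le]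
      _ = W ^ p * ∫⁻ t in Set.Ioi t₀, ENNReal.ofReal (t ^ (-p)) :=
          lintegral_const_mul' _ _ hWp_ne_top
      _ = W ^ p * ENNReal.ofReal (∫ t in Set.Ioi t₀, t ^ (-p)) := by
          rw [ofReal_integral_eq_lintegral_ofReal
            (integrableOn_Ioi_rpow_of_lt (by linarith) ht₀)
            ((ae_restrict_mem measurableSet_Ioi).mono fun t ht =>
              Real.rpow_nonneg (ht₀.trans ht).le _)]
      _ = ENNReal.ofReal (1 / (p - 1)) * W * V ^ (1 - 1/p) := by
          rw [integral_Ioi_rpow_of_lt (by linarith) ht₀]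
          have hgen : ∀ A : ℝ, -A / (1 - p) = A * (1 / (p - 1)) := fun A => by
            rw [show (1 - p : ℝ) = -(p - 1) by ring, div_neg, neg_div, neg_neg, mul_one_div]
          have hval : -t₀ ^ (-p + 1) / (-p + 1) = t₀ ^ (1 - p) * (1 / (p - 1)) := by
            rw [show (-p + 1 : ℝ) = 1 - p by ring]
            exact hgen _
          rw [hval]
          have ht₀pow : t₀ ^ (1 - p) = w ^ (1 - p) * v ^ ((1:ℝ) - 1/p) := by
            rw [ht₀def, Real.mul_rpow hwpos.le (Real.rpow_pos_of_pos hvpos _).le,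
              ← Real.rpow_mul hvpos.le, hexp]
          rw [ENNReal.ofReal_mul (by positivity), ht₀pow,
            ENNReal.ofReal_mul (by positivity),
            ← ENNReal.ofReal_rpow_of_pos hwpos, ← ENNReal.ofReal_rpow_of_pos hvpos,
            ← hWw, ← hVv]
          have : W ^ p * (W ^ ((1:ℝ) - p) * V ^ ((1:ℝ) - 1/p) * ENNReal.ofReal (1/(p-1)))
              = (W ^ p * W ^ ((1:ℝ) - p)) * V ^ ((1:ℝ) - 1/p) * ENNReal.ofReal (1/(p-1)) := by
            ring
          rw [this, ← ENNReal.rpow_add _ _ hW0 hWtop]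
          norm_num
          ring
  calc ∫⁻ t in Set.Ioi (0:ℝ), min V ((W / ENNReal.ofReal t) ^ p)
      = (∫⁻ t in Set.Ioc (0:ℝ) t₀, min V ((W / ENNReal.ofReal t) ^ p)) +
          ∫⁻ t in Set.Ioi t₀, min V ((W / ENNReal.ofReal t) ^ p) := by
        rw [hsplit, lintegral_union measurableSet_Ioi (Set.Ioc_disjoint_Ioi le_rfl)]
    _ ≤ W * V ^ (1 - 1/p) + ENNReal.ofReal (1/(p-1)) * W * V ^ (1 - 1/p) :=
        add_le_add part1 part2
    _ = ENNReal.ofReal (p / (p - 1)) * W * V ^ (1 - 1/p) := by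
        have h1 : ENNReal.ofReal (p / (p - 1)) = 1 + ENNReal.ofReal (1/(p-1)) := by
          rw [← ENNReal.ofReal_one, ← ENNReal.ofReal_add one_pos.le (by positivity)]
          congr 1
          field_simp
          ring
        rw [h1]
        ring

/-- The weak-type integral bound over a measurable subset of the cube. -/
lemma key_bound {n : ℕ} (p : ℝ) (hp : 1 < p)
    (Q₀ : Set (Fin n → ℝ)) (hQ₀ : IsCube Q₀)
    (f : (Fin n → ℝ) → ℝ) (hf : IntegrableOn f Q₀)
    (E : Set (Fin n → ℝ)) (hE : MeasurableSet E) (hEQ : E ⊆ Q₀) :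
    ∫⁻ x in E, ENNReal.ofReal |f x| ≤
      ENNReal.ofReal (p / (p - 1)) * wkNorm (volume.restrict Q₀) p f *
        volume E ^ (1 - 1/p) := by
  set μ := volume.restrict Q₀ with hμ
  set W := wkNorm μ p f with hWdef
  have hVfin : volume E ≠ ⊤ := ((measure_mono hEQ).trans_lt hQ₀.volume_lt_top).ne
  obtain hmeas := hf.aestronglyMeasurable.aemeasurable
  set g := hmeas.mk f with hgdef
  have hg : Measurable g := hmeas.measurable_mk
  have hfg : f =ᵐ[μ] g := hmeas.ae_eq_mk
  have hfgE : f =ᵐ[volume.restrict E] g := ae_restrict_of_ae_restrict_of_subset hEQ hfg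
  have hstep1 : ∫⁻ x in E, ENNReal.ofReal |f x| = ∫⁻ x in E, ENNReal.ofReal |g x| :=
    lintegral_congr_ae (hfgE.mono fun x hx => by dsimp only; rw [hx])
  have hSmeas : ∀ t : ℝ, MeasurableSet {a | t < |g a|} := fun t =>
    measurableSet_lt measurable_const hg.abs
  have hdistf : ∀ t : ℝ, distFun μ f t = volume ({a | t < |g a|} ∩ Q₀) := by
    intro t
    have : {x | t < |f x|} =ᵐ[μ] {x | t < |g x|} :=
      hfg.mono fun x hx => by change (t < |f x|) = (t < |g x|); rw [hx]
    rw [distFun, measure_congr this, hμ, Measure.restrict_apply (hSmeas t)]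
  rw [hstep1]
  have hlayer : ∫⁻ x in E, ENNReal.ofReal |g x| =
      ∫⁻ t in Set.Ioi (0:ℝ), volume ({a | t < |g a|} ∩ E) := by
    have := lintegral_eq_lintegral_meas_lt (volume.restrict E)
      (Filter.Eventually.of_forall fun x => abs_nonneg (g x)) hg.abs.aemeasurable
    rw [this]
    refine lintegral_congr fun t => ?_
    rw [Measure.restrict_apply (hSmeas t)]
  rw [hlayer]
  calc ∫⁻ t in Set.Ioi (0:ℝ), volume ({a | t < |g a|} ∩ E)
      ≤ ∫⁻ t in Set.Ioi (0:ℝ), min (volume E) ((W / ENNReal.ofReal t) ^ p) := by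
        refine lintegral_mono_ae ((ae_restrict_mem measurableSet_Ioi).mono fun t ht => ?_)
        refine le_min (measure_mono Set.inter_subset_right) ?_
        calc volume ({a | t < |g a|} ∩ E) ≤ volume ({a | t < |g a|} ∩ Q₀) :=
              measure_mono (Set.inter_subset_inter_right _ hEQ)
          _ = distFun μ f t := (hdistf t).symm
          _ ≤ (W / ENNReal.ofReal t) ^ p := distFun_le_of_wkNorm μ p hp f ht
    _ ≤ ENNReal.ofReal (p / (p - 1)) * W * volume E ^ (1 - 1/p) :=
        min_integral_bound p hp (volume E) W hVfin

/-- The double integral bound via the triangle inequality. -/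
lemma double_bound {n : ℕ} (f : (Fin n → ℝ) → ℝ) (Q : Set (Fin n → ℝ))
    (hmeas : AEMeasurable (fun x => ENNReal.ofReal |f x|) (volume.restrict Q))
    (h0 : volume Q ≠ 0) (htop : volume Q ≠ ⊤) :
    (volume Q)⁻¹ * ∫⁻ x in Q, ∫⁻ y in Q, ENNReal.ofReal |f x - f y| ≤
      2 * ∫⁻ x in Q, ENNReal.ofReal |f x| := by
  set I := ∫⁻ x in Q, ENNReal.ofReal |f x| with hI
  have hbound : ∫⁻ x in Q, ∫⁻ y in Q, ENNReal.ofReal |f x - f y| ≤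
      2 * (volume Q * I) := by
    calc ∫⁻ x in Q, ∫⁻ y in Q, ENNReal.ofReal |f x - f y|
        ≤ ∫⁻ x in Q, ∫⁻ y in Q, (ENNReal.ofReal |f x| + ENNReal.ofReal |f y|) := by
          refine lintegral_mono fun x => lintegral_mono fun y => ?_
          rw [← ENNReal.ofReal_add (abs_nonneg _) (abs_nonneg _)]
          exact ENNReal.ofReal_le_ofReal (abs_sub _ _)
      _ = ∫⁻ x in Q, (ENNReal.ofReal |f x| * volume Q + I) := by
          refine lintegral_congr fun x => ?_
          rw [lintegral_add_left' measurable_const.aemeasurable, setLIntegral_const, mul_comm]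
      _ = (∫⁻ x in Q, ENNReal.ofReal |f x| * volume Q) + I * volume Q := by
          rw [lintegral_add_left' (hmeas.mul_const _) _, setLIntegral_const]
      _ = 2 * (volume Q * I) := by
          rw [lintegral_mul_const' _ _ htop, ← hI]
          ring
  calc (volume Q)⁻¹ * ∫⁻ x in Q, ∫⁻ y in Q, ENNReal.ofReal |f x - f y|
      ≤ (volume Q)⁻¹ * (2 * (volume Q * I)) := mul_le_mul_right hbound _
    _ = 2 * I := by
        rw [mul_comm (2:ℝ≥0∞) _, ← mul_assoc, ← mul_assoc, ENNReal.inv_mul_cancel h0 htop,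
          one_mul, mul_comm]

/-- `GaRo_p(f,Q₀) ≤ (2p/(p-1)) ‖f‖*_{L(p,∞)(Q₀)}`. -/
theorem gaRo_le_wk {n : ℕ} (p : ℝ) (hp : 1 < p)
    (Q₀ : Set (Fin n → ℝ)) (hQ₀ : IsCube Q₀)
    (f : (Fin n → ℝ) → ℝ) (hf : IntegrableOn f Q₀) :
    GaRo p f Q₀ ≤ ENNReal.ofReal (2 * p / (p - 1)) * wkNorm (volume.restrict Q₀) p f := by
  have hp0 : (0:ℝ) < p := lt_trans one_pos hp
  set μ := volume.restrict Q₀ with hμ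
  set W := wkNorm μ p f with hWdef
  refine sInf_le fun Q hQ => ?_
  obtain ⟨hcube, hdisj⟩ := hQ
  have hmeasi : ∀ i, MeasurableSet (interior (Q i)) := fun i => isOpen_interior.measurableSet
  have hdisj' : Pairwise (Function.onFun Disjoint fun i => interior (Q i)) := fun i j hij =>
    Set.disjoint_iff_inter_eq_empty.mpr (hdisj hij)
  set E := ⋃ i, interior (Q i) with hE
  have hEmeas : MeasurableSet E := MeasurableSet.iUnion hmeasi
  have hEsub : E ⊆ Q₀ := Set.iUnion_subset fun i => interior_subset.trans (hcube i).2
  have hEvol : volume E = ∑' i, volume (Q i) := by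
    rw [hE, measure_iUnion hdisj' hmeasi]
    exact tsum_congr fun i => (hcube i).1.volume_interior
  have haem : ∀ i, AEMeasurable (fun x => ENNReal.ofReal |f x|) (volume.restrict (Q i)) := by
    intro i
    have h1 : AEMeasurable f (volume.restrict (Q i)) :=
      hf.aestronglyMeasurable.aemeasurable.mono_measure
        (Measure.restrict_mono (hcube i).2 le_rfl)
    exact (continuous_abs.measurable.comp_aemeasurable h1).ennreal_ofReal
  calc ∑' i, (volume (Q i))⁻¹ * ∫⁻ x in Q i, ∫⁻ y in Q i, ENNReal.ofReal |f x - f y|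
      ≤ ∑' i, 2 * ∫⁻ x in Q i, ENNReal.ofReal |f x| :=
        ENNReal.tsum_le_tsum fun i => double_bound f (Q i) (haem i)
          (hcube i).1.volume_pos.ne' (hcube i).1.volume_lt_top.ne
    _ = 2 * ∑' i, ∫⁻ x in interior (Q i), ENNReal.ofReal |f x| := by
        rw [ENNReal.tsum_mul_left]
        congr 1
        exact tsum_congr fun i => setLIntegral_congr (hcube i).1.ae_eq_interior
    _ = 2 * ∫⁻ x in E, ENNReal.ofReal |f x| := by
        rw [hE, lintegral_iUnion hmeasi hdisj']
    _ ≤ 2 * (ENNReal.ofReal (p / (p - 1)) * W * volume E ^ (1 - 1/p)) :=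
        mul_le_mul_right (key_bound p hp Q₀ hQ₀ f hf E hEmeas hEsub) _
    _ = ENNReal.ofReal (2 * p / (p - 1)) * W * (∑' i, volume (Q i)) ^ (1 - 1/p) := by
        rw [hEvol]
        have h2 : (2:ℝ≥0∞) * ENNReal.ofReal (p / (p - 1)) =
            ENNReal.ofReal (2 * p / (p - 1)) := by
          rw [show (2:ℝ≥0∞) = ENNReal.ofReal 2 by norm_num,
            ← ENNReal.ofReal_mul (by norm_num)]
          congr 1
          ring
        rw [← h2]
        ring
end
end

section
/- Let (Ω,μ) be a measure space and f a measurable function on Ω. Then f ∈ L(∞,∞)(Ω), i.e. ‖f‖_{L(∞,∞)} = sup_{t>0}( f**(t) − f*(t) ) < ∞, if and only if there exists C > 0 such that ∫_t^∞ λ_f(s) ds ≤ C λ_f(t) for all t > 0; moreover the infimum of all such constants C equals ‖f‖_{L(∞,∞)}. -/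
open MeasureTheory Set
open scoped ENNReal NNReal

noncomputable section

section Helpers

variable {α : Type*} [MeasurableSpace α]

lemma distFun_anti (μ : Measure α) (f : α → ℝ) : Antitone (distFun μ f) :=
  fun _ _ hab => measure_mono fun _ hx => lt_of_le_of_lt hab hx

lemma distFun_meas (μ : Measure α) (f : α → ℝ) : Measurable (distFun μ f) :=
  (distFun_anti μ f).measurable

lemma distFun_iSup (μ : Measure α) (f : α → ℝ) (t : ℝ) :
    distFun μ f t = ⨆ n : ℕ, distFun μ f (t + 1 / (n + 1)) := by
  have hset : {x | t < |f x|} = ⋃ n : ℕ, {x | t + 1 / (n + 1) < |f x|} := by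
    ext x
    simp only [mem_setOf_eq, mem_iUnion]
    constructor
    · intro hx
      obtain ⟨n, hn⟩ := exists_nat_one_div_lt (sub_pos.mpr hx)
      exact ⟨n, by push_cast; linarith⟩
    · rintro ⟨n, hn⟩
      have h0 : (0 : ℝ) < 1 / (n + 1) := by positivity
      linarith
  have hmono : Monotone (fun n : ℕ => {x | t + 1 / (n + 1 : ℝ) < |f x|}) := by
    intro m n hmn x hx
    simp only [mem_setOf_eq] at hx ⊢
    have h1 : (1 : ℝ) / (n + 1) ≤ 1 / (m + 1) := by
      apply one_div_le_one_div_of_le (by positivity)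
      exact_mod_cast Nat.succ_le_succ hmn
    linarith
  rw [distFun, hset, Directed.measure_iUnion hmono.directed_le]
  rfl

lemma distFun_le_of_forall_gt {μ : Measure α} {f : α → ℝ} {t : ℝ} {c : ℝ≥0∞}
    (h : ∀ v, t < v → distFun μ f v ≤ c) : distFun μ f t ≤ c := by
  rw [distFun_iSup]
  exact iSup_le fun n => h _ (lt_add_of_pos_right t (by positivity))

lemma rearr_anti (μ : Measure α) (f : α → ℝ) : Antitone (rearr μ f) := by
  intro a b hab
  refine sInf_le_sInf (image_mono ?_)
  exact fun s hs => ⟨hs.1, hs.2.trans (ENNReal.ofReal_le_ofReal hab)⟩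

lemma rearr_meas (μ : Measure α) (f : α → ℝ) : Measurable (rearr μ f) :=
  (rearr_anti μ f).measurable

lemma rearr_le_ofReal {μ : Measure α} {f : α → ℝ} {t u : ℝ} (hu : 0 < u)
    (h : distFun μ f u ≤ ENNReal.ofReal t) : rearr μ f t ≤ ENNReal.ofReal u :=
  sInf_le ⟨u, ⟨hu, h⟩, rfl⟩

lemma lt_rearr_iff {μ : Measure α} {f : α → ℝ} {s u : ℝ} (hu : 0 < u) :
    ENNReal.ofReal u < rearr μ f s ↔ ENNReal.ofReal s < distFun μ f u := by
  constructor
  · intro h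
    by_contra hc
    push_neg at hc
    exact absurd (rearr_le_ofReal hu hc) (not_le.mpr h)
  · intro h
    rw [distFun_iSup] at h
    obtain ⟨n, hn⟩ := lt_iSup_iff.mp h
    set v := u + 1 / (n + 1 : ℝ) with hv
    have hv0 : u < v := lt_add_of_pos_right u (by positivity)
    have hle : ENNReal.ofReal v ≤ rearr μ f s := by
      apply le_sInf
      rintro b ⟨w, ⟨hw0, hw⟩, rfl⟩
      apply ENNReal.ofReal_le_ofReal
      by_contra hwv
      push_neg at hwv
      exact absurd (le_trans (distFun_anti μ f hwv.le) hw) (not_le.mpr hn)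
    exact lt_of_lt_of_le ((ENNReal.ofReal_lt_ofReal_iff (hu.trans hv0)).mpr hv0) hle

lemma distFun_rearr_le {μ : Measure α} {f : α → ℝ} {t : ℝ} (ht : 0 < t)
    (h : rearr μ f t ≠ ⊤) :
    distFun μ f (rearr μ f t).toReal ≤ ENNReal.ofReal t := by
  apply distFun_le_of_forall_gt
  intro v hv
  have hv0 : 0 < v := lt_of_le_of_lt ENNReal.toReal_nonneg hv
  have h1 : rearr μ f t < ENNReal.ofReal v := by
    rw [← ENNReal.ofReal_toReal h]
    exact (ENNReal.ofReal_lt_ofReal_iff hv0).mpr hv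
  obtain ⟨b, ⟨w, ⟨hw0, hw⟩, rfl⟩, hbv⟩ := sInf_lt_iff.mp h1
  have hwv : w ≤ v := ((ENNReal.ofReal_lt_ofReal_iff hv0).mp hbv).le
  exact le_trans (distFun_anti μ f hwv) hw

lemma volume_ofReal_lt (c : ℝ≥0∞) :
    volume ({u : ℝ | ENNReal.ofReal u < c} ∩ Ioi 0) = c := by
  rcases eq_or_ne c ⊤ with rfl | hc
  · have h1 : {u : ℝ | ENNReal.ofReal u < ⊤} = univ := by
      ext u; simp [ENNReal.ofReal_lt_top]
    rw [h1, univ_inter, Real.volume_Ioi]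
  · have h1 : {u : ℝ | ENNReal.ofReal u < c} ∩ Ioi 0 = Ioo 0 c.toReal := by
      ext u
      simp only [mem_inter_iff, mem_setOf_eq, mem_Ioi, mem_Ioo]
      constructor
      · rintro ⟨h1, h2⟩
        exact ⟨h2, (ENNReal.ofReal_lt_iff_lt_toReal h2.le hc).mp h1⟩
      · rintro ⟨h1, h2⟩
        exact ⟨(ENNReal.ofReal_lt_iff_lt_toReal h1.le hc).mpr h2, h1⟩
    rw [h1, Real.volume_Ioo, sub_zero, ENNReal.ofReal_toReal hc]

lemma measurableSet_ofReal_lt (c : ℝ≥0∞) :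
    MeasurableSet {u : ℝ | ENNReal.ofReal u < c} :=
  ENNReal.measurable_ofReal measurableSet_Iio

lemma lintegral_ite_lt (c : ℝ≥0∞) :
    ∫⁻ u in Ioi (0 : ℝ), (if ENNReal.ofReal u < c then (1 : ℝ≥0∞) else 0) = c := by
  have hms := measurableSet_ofReal_lt c
  calc ∫⁻ u in Ioi (0 : ℝ), (if ENNReal.ofReal u < c then (1 : ℝ≥0∞) else 0)
      = ∫⁻ u in Ioi (0 : ℝ), {u : ℝ | ENNReal.ofReal u < c}.indicator 1 u := by
        apply lintegral_congr
        intro u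
        rw [Set.indicator_apply]
        rfl
    _ = volume ({u : ℝ | ENNReal.ofReal u < c} ∩ Ioi 0) := by
        rw [lintegral_indicator_one hms, Measure.restrict_apply hms]
    _ = c := volume_ofReal_lt c

lemma volume_inter_Ioc (c : ℝ≥0∞) {t : ℝ} (ht : 0 < t) :
    volume ({s : ℝ | ENNReal.ofReal s < c} ∩ Ioc 0 t) = min c (ENNReal.ofReal t) := by
  rcases eq_or_ne c ⊤ with rfl | hc
  · rw [min_eq_right le_top]
    have h1 : {s : ℝ | ENNReal.ofReal s < ⊤} = univ := by
      ext s; simp [ENNReal.ofReal_lt_top]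
    rw [h1, univ_inter, Real.volume_Ioc, sub_zero]
  · rcases le_or_gt c.toReal t with h | h
    · have hce : {s : ℝ | ENNReal.ofReal s < c} ∩ Ioc 0 t = Ioo 0 c.toReal := by
        ext s
        simp only [mem_inter_iff, mem_setOf_eq, mem_Ioc, mem_Ioo]
        constructor
        · rintro ⟨h1, h2, _⟩
          exact ⟨h2, (ENNReal.ofReal_lt_iff_lt_toReal h2.le hc).mp h1⟩
        · rintro ⟨h1, h2⟩
          exact ⟨(ENNReal.ofReal_lt_iff_lt_toReal h1.le hc).mpr h2, h1, le_trans h2.le h⟩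
      rw [hce, Real.volume_Ioo, sub_zero, ENNReal.ofReal_toReal hc, min_eq_left]
      calc c = ENNReal.ofReal c.toReal := (ENNReal.ofReal_toReal hc).symm
        _ ≤ ENNReal.ofReal t := ENNReal.ofReal_le_ofReal h
    · have hce : {s : ℝ | ENNReal.ofReal s < c} ∩ Ioc 0 t = Ioc 0 t := by
        ext s
        simp only [mem_inter_iff, mem_setOf_eq, mem_Ioc]
        constructor
        · rintro ⟨_, h2⟩; exact h2
        · intro hs
          exact ⟨(ENNReal.ofReal_lt_iff_lt_toReal hs.1.le hc).mpr (lt_of_le_of_lt hs.2 h), hs⟩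
      rw [hce, Real.volume_Ioc, sub_zero, min_eq_right]
      exact ((ENNReal.ofReal_lt_iff_lt_toReal ht.le hc).mpr h).le

lemma rearr_layer (μ : Measure α) (f : α → ℝ) {t : ℝ} (ht : 0 < t) :
    ∫⁻ s in Ioc (0 : ℝ) t, rearr μ f s
      = ∫⁻ u in Ioi (0 : ℝ), min (distFun μ f u) (ENNReal.ofReal t) := by
  set F : ℝ → ℝ → ℝ≥0∞ := fun s u => if ENNReal.ofReal s < distFun μ f u then 1 else 0 with hF
  have hmeasF : Measurable (Function.uncurry F) := by
    apply Measurable.ite _ measurable_const measurable_const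
    exact measurableSet_lt (ENNReal.measurable_ofReal.comp measurable_fst)
      ((distFun_meas μ f).comp measurable_snd)
  have step1 : ∫⁻ s in Ioc (0 : ℝ) t, rearr μ f s
      = ∫⁻ s in Ioc (0 : ℝ) t, ∫⁻ u in Ioi (0 : ℝ), F s u := by
    apply setLIntegral_congr_fun measurableSet_Ioc
    intro s hs
    have h1 : ∫⁻ u in Ioi (0 : ℝ), F s u
        = ∫⁻ u in Ioi (0 : ℝ), (if ENNReal.ofReal u < rearr μ f s then (1 : ℝ≥0∞) else 0) := by
      apply setLIntegral_congr_fun measurableSet_Ioi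
      intro u hu
      simp only [hF]
      rw [if_congr (lt_rearr_iff (μ := μ) (f := f) hu).symm rfl rfl]
    beta_reduce
    rw [h1, lintegral_ite_lt]
  have step2 : ∫⁻ s in Ioc (0 : ℝ) t, ∫⁻ u in Ioi (0 : ℝ), F s u
      = ∫⁻ u in Ioi (0 : ℝ), ∫⁻ s in Ioc (0 : ℝ) t, F s u :=
    lintegral_lintegral_swap hmeasF.aemeasurable
  have step3 : ∫⁻ u in Ioi (0 : ℝ), ∫⁻ s in Ioc (0 : ℝ) t, F s u
      = ∫⁻ u in Ioi (0 : ℝ), min (distFun μ f u) (ENNReal.ofReal t) := by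
    apply setLIntegral_congr_fun measurableSet_Ioi
    intro u hu
    have hms := measurableSet_ofReal_lt (distFun μ f u)
    calc ∫⁻ s in Ioc (0 : ℝ) t, F s u
        = ∫⁻ s in Ioc (0 : ℝ) t, {s : ℝ | ENNReal.ofReal s < distFun μ f u}.indicator 1 s := by
          apply lintegral_congr
          intro s
          rw [Set.indicator_apply]
          rfl
      _ = volume ({s : ℝ | ENNReal.ofReal s < distFun μ f u} ∩ Ioc 0 t) := by
          rw [lintegral_indicator_one hms, Measure.restrict_apply hms]
      _ = min (distFun μ f u) (ENNReal.ofReal t) := volume_inter_Ioc _ ht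
  rw [step1, step2, step3]

lemma lintegral_Ioi_split (g : ℝ → ℝ≥0∞) {r : ℝ} (hr : 0 ≤ r) :
    ∫⁻ u in Ioi (0 : ℝ), g u
      = (∫⁻ u in Ioc (0 : ℝ) r, g u) + ∫⁻ u in Ioi r, g u := by
  rw [← Ioc_union_Ioi_eq_Ioi hr, lintegral_union measurableSet_Ioi
    (Ioc_disjoint_Ioi le_rfl)]

lemma lintegral_Ioi_distFun_le (μ : Measure α) (f : α → ℝ) {r : ℝ} {c : ℝ≥0∞}
    (h : ∀ v, r < v → ∫⁻ s in Ioi v, distFun μ f s ≤ c) :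
    ∫⁻ s in Ioi r, distFun μ f s ≤ c := by
  set ν := volume.withDensity (distFun μ f) with hν
  have happ : ∀ v : ℝ, ν (Ioi v) = ∫⁻ s in Ioi v, distFun μ f s := fun v =>
    withDensity_apply _ measurableSet_Ioi
  have hU : Ioi r = ⋃ n : ℕ, Ioi (r + 1 / (n + 1 : ℝ)) := by
    ext u
    simp only [mem_Ioi, mem_iUnion]
    constructor
    · intro hu
      obtain ⟨n, hn⟩ := exists_nat_one_div_lt (sub_pos.mpr hu)
      exact ⟨n, by push_cast at hn ⊢; linarith⟩
    · rintro ⟨n, hn⟩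
      have h0 : (0 : ℝ) < 1 / (n + 1) := by positivity
      linarith
  have hmono : Monotone (fun n : ℕ => Ioi (r + 1 / (n + 1 : ℝ))) := by
    intro m n hmn
    apply Ioi_subset_Ioi
    have h1 : (1 : ℝ) / (n + 1) ≤ 1 / (m + 1) := by
      apply one_div_le_one_div_of_le (by positivity)
      exact_mod_cast Nat.succ_le_succ hmn
    linarith
  rw [← happ, hU, Directed.measure_iUnion hmono.directed_le]
  exact iSup_le fun n => (happ _) ▸ h _ (lt_add_of_pos_right r (by positivity))

lemma oscNorm_le_const (μ : Measure α) (f : α → ℝ) {C : ℝ≥0∞}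
    (hC : ∀ t : ℝ, 0 < t → ∫⁻ s in Ioi t, distFun μ f s ≤ C * distFun μ f t) :
    oscNorm μ f ≤ C := by
  rw [oscNorm]
  apply iSup₂_le
  intro t ht
  rw [tsub_le_iff_right]
  rcases eq_or_ne (rearr μ f t) ⊤ with hre | hre
  · rw [hre, add_top]
    exact le_top
  · set r := (rearr μ f t).toReal with hrdef
    have hr0 : (0 : ℝ) ≤ r := ENNReal.toReal_nonneg
    have hlr : distFun μ f r ≤ ENNReal.ofReal t := distFun_rearr_le ht hre
    rw [dstar, ENNReal.div_le_iff_le_mul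
      (Or.inl (ENNReal.ofReal_pos.mpr ht).ne') (Or.inl ENNReal.ofReal_ne_top)]
    rw [rearr_layer μ f ht, lintegral_Ioi_split _ hr0]
    have h1 : ∫⁻ u in Ioc (0 : ℝ) r, min (distFun μ f u) (ENNReal.ofReal t)
        ≤ ENNReal.ofReal t * ENNReal.ofReal r := by
      calc ∫⁻ u in Ioc (0 : ℝ) r, min (distFun μ f u) (ENNReal.ofReal t)
          ≤ ∫⁻ _ in Ioc (0 : ℝ) r, ENNReal.ofReal t :=
            lintegral_mono fun u => min_le_right _ _
        _ = ENNReal.ofReal t * volume (Ioc (0 : ℝ) r) := setLIntegral_const _ _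
        _ = ENNReal.ofReal t * ENNReal.ofReal r := by rw [Real.volume_Ioc, sub_zero]
    have h2 : ∫⁻ u in Ioi r, min (distFun μ f u) (ENNReal.ofReal t)
        ≤ C * ENNReal.ofReal t := by
      calc ∫⁻ u in Ioi r, min (distFun μ f u) (ENNReal.ofReal t)
          ≤ ∫⁻ u in Ioi r, distFun μ f u := lintegral_mono fun u => min_le_left _ _
        _ ≤ C * ENNReal.ofReal t := by
            apply lintegral_Ioi_distFun_le
            intro v hv
            exact (hC v (lt_of_le_of_lt hr0 hv)).trans
              (mul_le_mul_right ((distFun_anti μ f hv.le).trans hlr) C)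
    calc (∫⁻ u in Ioc (0 : ℝ) r, min (distFun μ f u) (ENNReal.ofReal t))
          + ∫⁻ u in Ioi r, min (distFun μ f u) (ENNReal.ofReal t)
        ≤ ENNReal.ofReal t * ENNReal.ofReal r + C * ENNReal.ofReal t := add_le_add h1 h2
      _ = (C + rearr μ f t) * ENNReal.ofReal t := by
          rw [← ENNReal.ofReal_toReal hre, ← hrdef]
          ring

lemma const_mem_of_oscNorm_lt (μ : Measure α) (f : α → ℝ) {C : ℝ≥0∞}
    (hC : oscNorm μ f < C) :
    ∀ t : ℝ, 0 < t → ∫⁻ s in Ioi t, distFun μ f s ≤ C * distFun μ f t := by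
  intro t ht
  set u := distFun μ f t with hudef
  rcases eq_or_ne u 0 with hu0 | hu0
  · have hz : ∀ s ∈ Ioi t, distFun μ f s = 0 := fun s hs =>
      le_antisymm (hu0 ▸ distFun_anti μ f hs.le) zero_le
    rw [setLIntegral_congr_fun measurableSet_Ioi hz, lintegral_zero]
    exact zero_le
  rcases eq_or_ne u ⊤ with hut | hut
  · have hC0 : C ≠ 0 := by
      rintro rfl
      exact absurd hC (by simp)
    rw [hut, ENNReal.mul_top hC0]
    exact le_top
  · set u' := u.toReal with hu'def
    have hu'0 : 0 < u' := ENNReal.toReal_pos hu0 hut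
    have hou : ENNReal.ofReal u' = u := ENNReal.ofReal_toReal hut
    have hre : rearr μ f u' ≤ ENNReal.ofReal t :=
      rearr_le_ofReal ht (by rw [hou])
    set J := ∫⁻ s in Ioi t, distFun μ f s with hJdef
    have hI : ∫⁻ v in Ioi (0 : ℝ), min (distFun μ f v) (ENNReal.ofReal u')
        = u * ENNReal.ofReal t + J := by
      rw [lintegral_Ioi_split _ ht.le]
      congr 1
      · have hmin : ∀ v ∈ Ioc (0 : ℝ) t,
            min (distFun μ f v) (ENNReal.ofReal u') = ENNReal.ofReal u' := by
          intro v hv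
          have hle : u ≤ distFun μ f v := distFun_anti μ f hv.2
          rw [hou]
          exact min_eq_right hle
        rw [setLIntegral_congr_fun measurableSet_Ioc hmin,
          setLIntegral_const, Real.volume_Ioc, sub_zero, hou, mul_comm]
      · apply setLIntegral_congr_fun measurableSet_Ioi
        intro v hv
        have hle : distFun μ f v ≤ u := distFun_anti μ f hv.le
        rw [hou]
        exact min_eq_left hle
    have hdm : dstar μ f u' * u = u * ENNReal.ofReal t + J := by
      rw [dstar, rearr_layer μ f hu'0, hI, hou, ENNReal.div_mul_cancel hu0 hut]
    have key : J ≤ (dstar μ f u' - rearr μ f u') * u := by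
      have h1 : dstar μ f u' * u - ENNReal.ofReal t * u
          ≤ (dstar μ f u' - rearr μ f u') * u := by
        rw [ENNReal.sub_mul (fun _ _ => hut)]
        exact tsub_le_tsub_left (mul_le_mul_left hre u) _
      refine le_trans ?_ h1
      rw [hdm, mul_comm (ENNReal.ofReal t) u,
        ENNReal.add_sub_cancel_left (ENNReal.mul_ne_top hut ENNReal.ofReal_ne_top)]
    have hosc : dstar μ f u' - rearr μ f u' ≤ oscNorm μ f :=
      le_iSup₂ (f := fun (s : ℝ) (_ : 0 < s) => dstar μ f s - rearr μ f s) u' hu'0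
    calc J ≤ (dstar μ f u' - rearr μ f u') * u := key
      _ ≤ C * u := mul_le_mul_left (hosc.trans hC.le) u

end Helpers

/-- `f ∈ L(∞,∞)(Ω)` iff there exists `C > 0` with
`∫_t^∞ λ_f(s) ds ≤ C λ_f(t)` for all `t > 0`; moreover the least such constant
equals `‖f‖_{L(∞,∞)} = sup_{t>0}(f**(t) - f*(t))`. -/
theorem linftyinfty_char {α : Type*} [MeasurableSpace α] (μ : Measure α)
    (f : α → ℝ) (hf : Measurable f) :
    (oscNorm μ f ≠ ⊤ ↔ ∃ C : ℝ, 0 < C ∧ ∀ t : ℝ, 0 < t →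
        ∫⁻ s in Set.Ioi t, distFun μ f s ≤ ENNReal.ofReal C * distFun μ f t) ∧
    sInf {C : ℝ≥0∞ | ∀ t : ℝ, 0 < t →
        ∫⁻ s in Set.Ioi t, distFun μ f s ≤ C * distFun μ f t} = oscNorm μ f := by
  have hSN : sInf {C : ℝ≥0∞ | ∀ t : ℝ, 0 < t →
      ∫⁻ s in Set.Ioi t, distFun μ f s ≤ C * distFun μ f t} = oscNorm μ f := by
    apply le_antisymm
    · by_contra hlt
      push_neg at hlt
      obtain ⟨C, hC1, hC2⟩ := exists_between hlt
      have hmem : C ∈ {C : ℝ≥0∞ | ∀ t : ℝ, 0 < t →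
          ∫⁻ s in Set.Ioi t, distFun μ f s ≤ C * distFun μ f t} :=
        const_mem_of_oscNorm_lt μ f hC1
      exact absurd (sInf_le hmem) (not_le.mpr hC2)
    · exact le_sInf fun C hC => oscNorm_le_const μ f hC
  refine ⟨⟨fun hN => ?_, ?_⟩, hSN⟩
  · have hlt : sInf {C : ℝ≥0∞ | ∀ t : ℝ, 0 < t →
        ∫⁻ s in Set.Ioi t, distFun μ f s ≤ C * distFun μ f t} < ⊤ := by
      rw [hSN]
      exact lt_top_iff_ne_top.mpr hN
    obtain ⟨C₀, hC₀mem, hC₀lt⟩ := sInf_lt_iff.mp hlt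
    refine ⟨C₀.toReal + 1, by positivity, fun t ht => ?_⟩
    refine (hC₀mem t ht).trans (mul_le_mul_left ?_ _)
    calc C₀ = ENNReal.ofReal C₀.toReal := (ENNReal.ofReal_toReal hC₀lt.ne).symm
      _ ≤ ENNReal.ofReal (C₀.toReal + 1) := ENNReal.ofReal_le_ofReal (by linarith)
  · rintro ⟨C, hC0, hC⟩
    rw [← hSN]
    exact ne_top_of_le_ne_top ENNReal.ofReal_ne_top (sInf_le hC)
end
end

section
/- Let (Ω,μ) be a measure space, f a measurable function on Ω, and C > 0. If ∫_t^∞ λ_f(s) ds ≤ C λ_f(t) for all t > 0, then f**(t) − f*(t) ≤ C for all t > 0. -/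
open MeasureTheory Set
open scoped ENNReal NNReal

noncomputable section

section Aux

variable {α : Type*} [MeasurableSpace α] (μ : Measure α) (f : α → ℝ)

lemma distFun_antitone : Antitone (distFun μ f) := fun s t hst =>
  measure_mono fun x hx => lt_of_le_of_lt hst hx

lemma rearr_antitone : Antitone (rearr μ f) := fun s t hst => by
  refine sInf_le_sInf (image_mono ?_)
  exact fun u hu => ⟨hu.1, hu.2.trans (ENNReal.ofReal_le_ofReal hst)⟩

lemma rearr_measurable : Measurable (rearr μ f) := (rearr_antitone μ f).measurable

/-- If `ofReal y < f*(t)` with `y > 0`, then `λ_f(y) > ofReal t`. -/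
lemma lt_distFun_of_lt_rearr {t y : ℝ} (hy : 0 < y)
    (hlt : ENNReal.ofReal y < rearr μ f t) : ENNReal.ofReal t < distFun μ f y := by
  by_contra hc
  push_neg at hc
  have hmem : ENNReal.ofReal y ∈
      ENNReal.ofReal '' {s : ℝ | 0 < s ∧ distFun μ f s ≤ ENNReal.ofReal t} := ⟨y, ⟨hy, hc⟩, rfl⟩
  exact absurd (sInf_le hmem) (not_le.2 hlt)

/-- If `f*(t) < ofReal y` then `λ_f(y) ≤ ofReal t`. -/
lemma distFun_le_of_rearr_lt {t y : ℝ} (hlt : rearr μ f t < ENNReal.ofReal y) :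
    distFun μ f y ≤ ENNReal.ofReal t := by
  have hy : 0 < y := by
    by_contra hy
    push_neg at hy
    rw [ENNReal.ofReal_eq_zero.2 hy] at hlt
    exact absurd hlt (by simp)
  rw [rearr] at hlt
  obtain ⟨e, he, helt⟩ := sInf_lt_iff.1 hlt
  obtain ⟨u, ⟨hu0, hule⟩, rfl⟩ := he
  have huy : u < y := (ENNReal.ofReal_lt_ofReal_iff hy).1 helt
  exact le_trans (distFun_antitone μ f huy.le) hule

/-- A tail integral over `Ioi b` is the sup of integrals over `Ioi (b + 1/(n+1))`. -/
lemma lintegral_Ioi_eq_iSup (g : ℝ → ℝ≥0∞) (hg : Measurable g) (b : ℝ) :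
    ∫⁻ y in Ioi b, g y = ⨆ n : ℕ, ∫⁻ y in Ioi (b + 1 / (n + 1 : ℝ)), g y := by
  have hmeas : ∀ n : ℕ, MeasurableSet (Ioi (b + 1 / (n + 1 : ℝ))) := fun n => measurableSet_Ioi
  have hrw : ∀ n : ℕ, ∫⁻ y in Ioi (b + 1 / (n + 1 : ℝ)), g y
      = ∫⁻ y, (Ioi (b + 1 / (n + 1 : ℝ))).indicator g y := fun n =>
    (lintegral_indicator (hmeas n) g).symm
  rw [← lintegral_indicator measurableSet_Ioi]
  simp_rw [hrw]
  rw [← lintegral_iSup]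
  · congr 1
    funext y
    rcases le_or_gt y b with hyb | hyb
    · have h1 : (Ioi b).indicator g y = 0 := indicator_of_notMem (by simpa using hyb) g
      have h2 : ∀ n : ℕ, (Ioi (b + 1 / (n + 1 : ℝ))).indicator g y = 0 := fun n =>
        indicator_of_notMem (by
          simp only [mem_Ioi, not_lt]
          have : (0:ℝ) ≤ 1 / (n + 1 : ℝ) := by positivity
          linarith) g
      rw [h1]
      symm
      simp only [ENNReal.iSup_eq_zero]
      exact h2
    · obtain ⟨n, hn⟩ := exists_nat_one_div_lt (sub_pos.2 hyb)
      refine le_antisymm ?_ ?_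
      · rw [indicator_of_mem (mem_Ioi.2 hyb) g]
        refine le_trans ?_ (le_iSup _ n)
        rw [indicator_of_mem (mem_Ioi.2 (by linarith)) g]
      · refine iSup_le fun n => ?_
        exact indicator_le_indicator_of_subset
          (Ioi_subset_Ioi (le_add_of_nonneg_right (by positivity)))
          (fun _ => zero_le) y
  · exact fun n => hg.indicator (hmeas n)
  · intro m n hmn
    refine indicator_le_indicator_of_subset (Ioi_subset_Ioi ?_) (fun _ => zero_le)
    have hcast : (m : ℝ) + 1 ≤ (n : ℝ) + 1 := by exact_mod_cast Nat.succ_le_succ hmn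
    have : 1 / (n + 1 : ℝ) ≤ 1 / (m + 1 : ℝ) := one_div_le_one_div_of_le (by positivity) hcast
    linarith

end Aux
/-- if `∫_t^∞ λ_f(s) ds ≤ C λ_f(t)` for all `t > 0`, then
`f**(t) - f*(t) ≤ C` for all `t > 0`. -/
theorem osc_le_of_distFun_bound {α : Type*} [MeasurableSpace α] (μ : Measure α)
    (f : α → ℝ) (hf : Measurable f) (C : ℝ) (hC : 0 < C)
    (h : ∀ t : ℝ, 0 < t →
      ∫⁻ s in Set.Ioi t, distFun μ f s ≤ ENNReal.ofReal C * distFun μ f t) :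
    ∀ t : ℝ, 0 < t → dstar μ f t - rearr μ f t ≤ ENNReal.ofReal C := by
  intro t ht
  by_cases ha : rearr μ f t = ∞
  · rw [ha, ENNReal.sub_top]
    exact zero_le
  set a : ℝ≥0∞ := rearr μ f t with ha_def
  set a₀ : ℝ := a.toReal with ha₀_def
  have ha₀0 : 0 ≤ a₀ := ENNReal.toReal_nonneg
  have haa : a = ENNReal.ofReal a₀ := (ENNReal.ofReal_toReal ha).symm
  -- the distribution function is ≤ t beyond a₀
  have hkey : ∀ y : ℝ, a₀ < y → distFun μ f y ≤ ENNReal.ofReal t := by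
    intro y hy
    refine distFun_le_of_rearr_lt μ f ?_
    rw [← ha_def, haa]
    exact (ENNReal.ofReal_lt_ofReal_iff (ha₀0.trans_lt hy)).2 hy
  -- tail bound on the integral of the distribution function
  have htail : ∫⁻ y in Ioi a₀, distFun μ f y ≤ ENNReal.ofReal C * ENNReal.ofReal t := by
    rw [lintegral_Ioi_eq_iSup _ (distFun_antitone μ f).measurable]
    refine iSup_le fun n => ?_
    have hpos : (0:ℝ) < a₀ + 1 / (n + 1 : ℝ) := by positivity
    refine le_trans (h _ hpos) (mul_le_mul_right (hkey _ ?_) _)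
    have : (0:ℝ) < 1 / (n + 1 : ℝ) := by positivity
    linarith
  -- the two-variable indicator function
  set F : ℝ → ℝ → ℝ≥0∞ := fun s y =>
    ({y : ℝ | a₀ < y ∧ ENNReal.ofReal y < rearr μ f s}).indicator (fun _ => (1:ℝ≥0∞)) y
    with hF_def
  have hFmeas : Measurable (Function.uncurry F) := by
    have hS : MeasurableSet {p : ℝ × ℝ | a₀ < p.2 ∧ ENNReal.ofReal p.2 < rearr μ f p.1} := by
      have : {p : ℝ × ℝ | a₀ < p.2 ∧ ENNReal.ofReal p.2 < rearr μ f p.1}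
          = (Prod.snd ⁻¹' Ioi a₀) ∩ {p : ℝ × ℝ | ENNReal.ofReal p.2 < rearr μ f p.1} := rfl
      rw [this]
      exact (measurable_snd measurableSet_Ioi).inter
        (measurableSet_lt (ENNReal.measurable_ofReal.comp measurable_snd)
          ((rearr_measurable μ f).comp measurable_fst))
    have heq : Function.uncurry F =
        ({p : ℝ × ℝ | a₀ < p.2 ∧ ENNReal.ofReal p.2 < rearr μ f p.1}).indicator
          (fun _ => (1:ℝ≥0∞)) := by
      funext p
      by_cases hp : a₀ < p.2 ∧ ENNReal.ofReal p.2 < rearr μ f p.1 <;>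
        simp [Function.uncurry, hF_def, Set.indicator_apply, hp]
    rw [heq]
    exact measurable_const.indicator hS
  -- inner integral in y
  have hinnerA : ∀ s ∈ Ioc (0:ℝ) t, ∫⁻ y in Ioi (0:ℝ), F s y = rearr μ f s - a := by
    intro s hs
    have hra : a ≤ rearr μ f s := rearr_antitone μ f hs.2
    set T := {y : ℝ | a₀ < y ∧ ENNReal.ofReal y < rearr μ f s} with hT_def
    have hTmeas : MeasurableSet T := by
      have : T = Ioi a₀ ∩ (ENNReal.ofReal ⁻¹' Iio (rearr μ f s)) := rfl
      rw [this]
      exact measurableSet_Ioi.inter (ENNReal.measurable_ofReal measurableSet_Iio)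
    have hcalc : ∫⁻ y in Ioi (0:ℝ), F s y = volume (T ∩ Ioi 0) := by
      simp only [hF_def]
      rw [lintegral_indicator hTmeas, setLIntegral_one, Measure.restrict_apply hTmeas]
    have hsub : T ∩ Ioi 0 = T :=
      inter_eq_self_of_subset_left fun y hy => mem_Ioi.2 (ha₀0.trans_lt hy.1)
    rw [hcalc, hsub]
    by_cases hfin : rearr μ f s = ∞
    · have hT : T = Ioi a₀ := by
        ext y
        simp [hT_def, hfin, ENNReal.ofReal_lt_top]
      rw [hT, Real.volume_Ioi, hfin, haa]
      exact (ENNReal.sub_eq_top_iff.2 ⟨rfl, ENNReal.ofReal_ne_top⟩).symm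
    · have hT : T = Ioo a₀ ((rearr μ f s).toReal) := by
        ext y
        exact and_congr_right fun hy =>
          ENNReal.ofReal_lt_iff_lt_toReal (ha₀0.trans hy.le) hfin
      rw [hT, Real.volume_Ioo, ENNReal.ofReal_sub _ ha₀0,
        ENNReal.ofReal_toReal hfin, haa]
  -- inner integral in s
  have hinnerB : ∀ y : ℝ,
      ∫⁻ s in Ioc (0:ℝ) t, F s y ≤ (Ioi a₀).indicator (distFun μ f) y := by
    intro y
    rcases le_or_gt y a₀ with hy | hy
    · have hz : ∀ s, F s y = 0 := fun s =>
        indicator_of_notMem (fun hmem => absurd hmem.1 (not_lt.2 hy)) _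
      simp [hz]
    · rw [indicator_of_mem (mem_Ioi.2 hy)]
      have hy0 : 0 < y := ha₀0.trans_lt hy
      set W := {s : ℝ | ENNReal.ofReal s < distFun μ f y} with hW_def
      have hWmeas : MeasurableSet W := by
        have : W = ENNReal.ofReal ⁻¹' Iio (distFun μ f y) := rfl
        rw [this]
        exact ENNReal.measurable_ofReal measurableSet_Iio
      have hle : ∀ s, F s y ≤ W.indicator (fun _ => (1:ℝ≥0∞)) s := by
        intro s
        have hfs : F s y = ({y : ℝ | a₀ < y ∧ ENNReal.ofReal y < rearr μ f s}).indicator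
            (fun _ => (1:ℝ≥0∞)) y := rfl
        by_cases hmem : a₀ < y ∧ ENNReal.ofReal y < rearr μ f s
        · have hsd : ENNReal.ofReal s < distFun μ f y :=
            lt_distFun_of_lt_rearr μ f hy0 hmem.2
          rw [hfs]
          simp [Set.indicator_apply, mem_setOf_eq, hmem, hW_def, hsd]
        · rw [hfs]
          simp only [Set.indicator_apply, mem_setOf_eq, if_neg hmem]
          exact zero_le
      refine le_trans (lintegral_mono hle) ?_
      rw [lintegral_indicator hWmeas, setLIntegral_one, Measure.restrict_apply hWmeas]
      by_cases hfin : distFun μ f y = ∞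
      · rw [hfin]; exact le_top
      · refine le_trans (measure_mono (t := Ioo 0 ((distFun μ f y).toReal)) ?_) ?_
        · rintro s ⟨hsW, hs0, -⟩
          exact ⟨hs0, (ENNReal.ofReal_lt_iff_lt_toReal hs0.le hfin).1 hsW⟩
        · rw [Real.volume_Ioo, sub_zero]
          exact ENNReal.ofReal_toReal_le
  -- Tonelli
  have hswap : ∫⁻ s in Ioc (0:ℝ) t, (rearr μ f s - a)
      ≤ ENNReal.ofReal C * ENNReal.ofReal t := by
    have h1 : ∫⁻ s in Ioc (0:ℝ) t, (rearr μ f s - a)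
        = ∫⁻ s in Ioc (0:ℝ) t, ∫⁻ y in Ioi (0:ℝ), F s y :=
      setLIntegral_congr_fun measurableSet_Ioc
        (fun s hs => (hinnerA s hs).symm)
    rw [h1, lintegral_lintegral_swap hFmeas.aemeasurable]
    refine le_trans (lintegral_mono hinnerB) ?_
    rw [lintegral_indicator measurableSet_Ioi, Measure.restrict_restrict measurableSet_Ioi]
    exact le_trans (lintegral_mono_set inter_subset_left) htail
  -- splitting the integral of rearr
  have hsplit : ∫⁻ s in Ioc (0:ℝ) t, rearr μ f s
      = ENNReal.ofReal t * a + ∫⁻ s in Ioc (0:ℝ) t, (rearr μ f s - a) := by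
    have h1 : ∫⁻ s in Ioc (0:ℝ) t, rearr μ f s
        = ∫⁻ s in Ioc (0:ℝ) t, (a + (rearr μ f s - a)) :=
      setLIntegral_congr_fun measurableSet_Ioc
        (fun s hs => (add_tsub_cancel_of_le (rearr_antitone μ f hs.2)).symm)
    rw [h1, lintegral_add_left measurable_const, setLIntegral_const, Real.volume_Ioc,
      sub_zero, mul_comm]
  -- conclusion
  rw [tsub_le_iff_right]
  have hne : ENNReal.ofReal t ≠ 0 := by
    simp only [ne_eq, ENNReal.ofReal_eq_zero, not_le]
    exact ht
  show dstar μ f t ≤ ENNReal.ofReal C + a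
  rw [dstar, ENNReal.div_le_iff hne ENNReal.ofReal_ne_top]
  calc ∫⁻ s in Ioc (0:ℝ) t, rearr μ f s
      ≤ ENNReal.ofReal t * a + ENNReal.ofReal C * ENNReal.ofReal t := by
        rw [hsplit]; exact add_le_add_right hswap _
    _ = (ENNReal.ofReal C + a) * ENNReal.ofReal t := by ring
end
end
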